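/- There exists a constant C > 0 such that for all natural numbers n ≥ 1 and all integers k with 0 ≤ k < n, the following holds: if Q_{a,b} and Q_{a',b'} are two distinct squares of K_n such that the words (a_1,…,a_k) = (a'_1,…,a'_k) and (b_1,…,b_k) = (b'_1,…,b'_k) agree up to index k (so both squares lie in a common square of side 4^{-k}) but (a_{k+1}, b_{k+1}) ≠ (a'_{k+1}, b'_{k+1}) (they lie in no common square of side 4^{-k-1}), then ∫₀^π |proj_θ(Q_{a,b}) ∩ proj_θ(Q_{a',b'})| dθ ≤ C · 4^{k − 2n}. -/

import Mathlib

open MeasureTheory Real Set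

noncomputable section

/-- Digit value: `false ↦ 0`, `true ↦ 3`. -/
def dig (b : Bool) : ℝ := if b then 3 else 0

/-- Left endpoint `x_a = ∑ a_j 4^{-j}` of the interval coded by the word `a ∈ {0,3}^n`. -/
def cantorX {n : ℕ} (a : Fin n → Bool) : ℝ :=
  ∑ j : Fin n, dig (a j) * (4 : ℝ) ^ (-((j : ℕ) + 1) : ℤ)

/-- The `n`-th generation `C_n` of the middle-half Cantor set. -/
def cantorC (n : ℕ) : Set ℝ :=
  ⋃ a : Fin n → Bool, Icc (cantorX a) (cantorX a + (4 : ℝ) ^ (-(n : ℤ)))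

/-- The `n`-th generation `K_n = C_n × C_n` of the four-corner Cantor set. -/
def cantorK (n : ℕ) : Set (ℝ × ℝ) := cantorC n ×ˢ cantorC n

/-- The square `Q_{a,b}` of side `4^{-n}` of the `n`-th generation. -/
def cantorSq {n : ℕ} (a b : Fin n → Bool) : Set (ℝ × ℝ) :=
  Icc (cantorX a) (cantorX a + (4 : ℝ) ^ (-(n : ℤ))) ×ˢ
    Icc (cantorX b) (cantorX b + (4 : ℝ) ^ (-(n : ℤ)))

/-- Orthogonal projection in direction `θ`: `proj_θ (x, y) = x cos θ + y sin θ`. -/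
def projAngle (θ : ℝ) (p : ℝ × ℝ) : ℝ := p.1 * Real.cos θ + p.2 * Real.sin θ

/-- The Favard length of a planar set. -/
def favard (E : Set (ℝ × ℝ)) : ℝ :=
  (1 / π) * ∫ θ in (0 : ℝ)..π, (volume (projAngle θ '' E)).toReal

end


lemma quarter_pow (m : ℕ) : ((1:ℝ)/4) ^ m = (4:ℝ) ^ (-(m:ℤ)) := by
  rw [one_div, inv_pow, ← zpow_natCast, ← zpow_neg]

lemma cantorX_eq_range {n : ℕ} (a : Fin n → Bool) :
    cantorX a = ∑ j ∈ Finset.range n,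
      (if h : j < n then dig (a ⟨j, h⟩) else 0) * ((1:ℝ)/4) ^ (j+1) := by
  rw [cantorX, ← Fin.sum_univ_eq_sum_range]
  refine Finset.sum_congr rfl fun i _ => ?_
  rw [dif_pos i.isLt, Fin.eta, quarter_pow]
  push_cast
  ring_nf

lemma sep {n k : ℕ} (hk : k < n) (a a' : Fin n → Bool)
    (hagree : ∀ i : Fin n, (i : ℕ) < k → a i = a' i)
    (hne : a ⟨k, hk⟩ ≠ a' ⟨k, hk⟩) :
    2 * ((1:ℝ)/4) ^ (k+1) ≤ |cantorX a - cantorX a'| := by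
  set D : ℕ → ℝ := fun j =>
    (if h : j < n then dig (a ⟨j, h⟩) - dig (a' ⟨j, h⟩) else 0) * ((1:ℝ)/4) ^ (j+1) with hD
  have hdiff : cantorX a - cantorX a' = ∑ j ∈ Finset.range n, D j := by
    rw [cantorX_eq_range a, cantorX_eq_range a', ← Finset.sum_sub_distrib]
    refine Finset.sum_congr rfl fun j hj => ?_
    have hjn : j < n := Finset.mem_range.1 hj
    simp only [hD, dif_pos hjn]
    ring
  have hsplit : ∑ j ∈ Finset.range n, D j
      = (∑ j ∈ Finset.Ico 0 k, D j) + ∑ j ∈ Finset.Ico k n, D j := by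
    rw [Finset.range_eq_Ico, ← Finset.sum_Ico_consecutive _ (Nat.zero_le k) hk.le]
  have h0 : ∑ j ∈ Finset.Ico 0 k, D j = 0 := by
    refine Finset.sum_eq_zero fun j hj => ?_
    have hjk : j < k := (Finset.mem_Ico.1 hj).2
    have hjn : j < n := hjk.trans hk
    simp only [hD, dif_pos hjn, hagree ⟨j, hjn⟩ hjk, sub_self, zero_mul]
  have h2 : ∑ j ∈ Finset.Ico k n, D j = D k + ∑ j ∈ Finset.Ico (k+1) n, D j :=
    Finset.sum_eq_sum_Ico_succ_bot hk D
  have hDk : |D k| = 3 * ((1:ℝ)/4) ^ (k+1) := by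
    simp only [hD, dif_pos hk, abs_mul]
    have h3 : |dig (a ⟨k, hk⟩) - dig (a' ⟨k, hk⟩)| = 3 := by
      rcases Bool.eq_false_or_eq_true (a ⟨k, hk⟩) with h | h <;>
        rcases Bool.eq_false_or_eq_true (a' ⟨k, hk⟩) with h' | h' <;>
        simp [h, h'] at hne ⊢ <;> simp [dig] <;> norm_num
    rw [h3, abs_of_nonneg (by positivity)]
  have htail : |∑ j ∈ Finset.Ico (k+1) n, D j| ≤ ((1:ℝ)/4) ^ (k+1) := by
    calc |∑ j ∈ Finset.Ico (k+1) n, D j| ≤ ∑ j ∈ Finset.Ico (k+1) n, |D j| :=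
          Finset.abs_sum_le_sum_abs _ _
      _ ≤ ∑ j ∈ Finset.Ico (k+1) n, 3 * ((1:ℝ)/4) ^ (j+1) := by
          refine Finset.sum_le_sum fun j _ => ?_
          by_cases hjn : j < n
          · simp only [hD, dif_pos hjn, abs_mul]
            rw [abs_of_nonneg (by positivity : (0:ℝ) ≤ ((1:ℝ)/4) ^ (j+1))]
            have : |dig (a ⟨j, hjn⟩) - dig (a' ⟨j, hjn⟩)| ≤ 3 := by
              rcases Bool.eq_false_or_eq_true (a ⟨j, hjn⟩) with h | h <;>
                rcases Bool.eq_false_or_eq_true (a' ⟨j, hjn⟩) with h' | h' <;>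
                simp [h, h', dig] <;> norm_num
            nlinarith [pow_nonneg (by norm_num : (0:ℝ) ≤ 1/4) (j+1)]
          · simp only [hD, dif_neg hjn, zero_mul, abs_zero]
            positivity
      _ ≤ ((1:ℝ)/4) ^ (k+1) := by
          have hgeom : ∑ j ∈ Finset.Ico (k+1) n, ((1:ℝ)/4) ^ j
              = (((1:ℝ)/4) ^ n - ((1:ℝ)/4) ^ (k+1)) / ((1:ℝ)/4 - 1) :=
            geom_sum_Ico (by norm_num) hk
          have h4 : ∑ j ∈ Finset.Ico (k+1) n, 3 * ((1:ℝ)/4) ^ (j+1)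
              = (3/4) * ∑ j ∈ Finset.Ico (k+1) n, ((1:ℝ)/4) ^ j := by
            rw [Finset.mul_sum]
            exact Finset.sum_congr rfl fun j _ => by ring
          rw [h4, hgeom]
          have h5 : (0:ℝ) ≤ ((1:ℝ)/4) ^ n := by positivity
          ring_nf
          nlinarith [h5]
  have habs : |D k| - |∑ j ∈ Finset.Ico (k+1) n, D j| ≤ |cantorX a - cantorX a'| := by
    rw [hdiff, hsplit, h0, zero_add, h2]
    have := abs_add_le (D k + ∑ j ∈ Finset.Ico (k+1) n, D j) (-(∑ j ∈ Finset.Ico (k+1) n, D j))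
    simp only [add_neg_cancel_right, abs_neg] at this
    linarith
  rw [hDk] at habs
  linarith

lemma proj_image_subset (θ x y s : ℝ) (hs : 0 ≤ s) :
    projAngle θ '' (Icc x (x+s) ×ˢ Icc y (y+s)) ⊆
      Icc (x * Real.cos θ + y * Real.sin θ - 2*s) (x * Real.cos θ + y * Real.sin θ + 2*s) := by
  rintro _ ⟨⟨u, v⟩, ⟨⟨hu1, hu2⟩, hv1, hv2⟩, rfl⟩
  have hc1 := Real.neg_one_le_cos θ
  have hc2 := Real.cos_le_one θ
  have hs1 := Real.neg_one_le_sin θ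
  have hs2 := Real.sin_le_one θ
  simp only [projAngle, mem_Icc]
  constructor <;> nlinarith [mul_le_mul_of_nonneg_left hc1 (by linarith : (0:ℝ) ≤ u - x),
    mul_le_mul_of_nonneg_left hc2 (by linarith : (0:ℝ) ≤ u - x),
    mul_le_mul_of_nonneg_left hs1 (by linarith : (0:ℝ) ≤ v - y),
    mul_le_mul_of_nonneg_left hs2 (by linarith : (0:ℝ) ≤ v - y)]

lemma proj_vol_le (θ x y s : ℝ) (hs : 0 ≤ s) :
    volume (projAngle θ '' (Icc x (x+s) ×ˢ Icc y (y+s))) ≤ ENNReal.ofReal (4*s) := by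
  refine le_trans (measure_mono (proj_image_subset θ x y s hs)) ?_
  rw [Real.volume_Icc]
  exact ENNReal.ofReal_le_ofReal (by ring_nf; linarith)

lemma proj_cap_nonempty {θ x y x' y' s : ℝ} (hs : 0 ≤ s)
    (h : (projAngle θ '' (Icc x (x+s) ×ˢ Icc y (y+s)) ∩
          projAngle θ '' (Icc x' (x'+s) ×ˢ Icc y' (y'+s))).Nonempty) :
    |(x - x') * Real.cos θ + (y - y') * Real.sin θ| ≤ 2*s := by
  obtain ⟨z, ⟨⟨u, v⟩, ⟨⟨hu1, hu2⟩, hv1, hv2⟩, hz⟩, ⟨⟨u', v'⟩, ⟨⟨hu1', hu2'⟩, hv1', hv2'⟩, hz'⟩⟩ := h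
  have h0 : u * Real.cos θ + v * Real.sin θ = u' * Real.cos θ + v' * Real.sin θ := by
    simp only [projAngle] at hz hz'; rw [hz, hz']
  have key : (x - x') * Real.cos θ + (y - y') * Real.sin θ
      = ((x - u) - (x' - u')) * Real.cos θ + ((y - v) - (y' - v')) * Real.sin θ := by
    linear_combination h0
  rw [key]
  have b1 : |(x - u) - (x' - u')| ≤ s := abs_le.2 ⟨by linarith, by linarith⟩
  have b2 : |(y - v) - (y' - v')| ≤ s := abs_le.2 ⟨by linarith, by linarith⟩
  calc |((x - u) - (x' - u')) * Real.cos θ + ((y - v) - (y' - v')) * Real.sin θ|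
      ≤ |((x - u) - (x' - u')) * Real.cos θ| + |((y - v) - (y' - v')) * Real.sin θ| := abs_add_le _ _
    _ ≤ s * 1 + s * 1 := by
        rw [abs_mul, abs_mul]
        gcongr
        · exact Real.abs_cos_le_one θ
        · exact Real.abs_sin_le_one θ
    _ = 2*s := by ring

lemma arcsin_le_bound {t : ℝ} (h0 : 0 ≤ t) (h1 : t ≤ 1) : Real.arcsin t ≤ π/2 * t := by
  have h := Real.mul_le_sin (Real.arcsin_nonneg.2 h0) (Real.arcsin_le_pi_div_two t)
  rw [Real.sin_arcsin (by linarith) h1] at h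
  have hπ := Real.pi_pos
  calc Real.arcsin t = (π/2) * (2/π * Real.arcsin t) := by field_simp
    _ ≤ π/2 * t := by gcongr

lemma angle_meas (φ t : ℝ) (ht : 0 ≤ t) :
    volume {θ : ℝ | θ ∈ Icc (0:ℝ) π ∧ |Real.cos (θ - φ)| ≤ t} ≤
      ENNReal.ofReal (6 * Real.arcsin t) := by
  set s := Real.arcsin t with hs
  have hs0 : 0 ≤ s := Real.arcsin_nonneg.2 ht
  have hπ := Real.pi_pos
  set M : ℤ := ⌈-φ/π⌉ with hM
  have hsub : {θ : ℝ | θ ∈ Icc (0:ℝ) π ∧ |Real.cos (θ - φ)| ≤ t} ⊆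
      ⋃ m ∈ Finset.Icc (M-1) (M+1),
        Icc (φ + π/2 + (m:ℝ)*π - s) (φ + π/2 + (m:ℝ)*π + s) := by
    rintro θ ⟨⟨h0, hπθ⟩, hct⟩
    set m : ℤ := round ((θ - φ - π/2)/π) with hm
    have hv : |θ - φ - π/2 - (m:ℝ)*π| ≤ π/2 := by
      have h1 := abs_sub_round ((θ - φ - π/2)/π)
      have h2 : θ - φ - π/2 - (m:ℝ)*π = ((θ - φ - π/2)/π - (m:ℝ)) * π := by
        field_simp
      rw [h2, abs_mul, abs_of_pos hπ]
      calc |(θ - φ - π/2)/π - (m:ℝ)| * π ≤ (1/2) * π :=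
            mul_le_mul_of_nonneg_right h1 hπ.le
        _ = π/2 := by ring
    set v : ℝ := θ - φ - π/2 - (m:ℝ)*π with hvdef
    have hcos : |Real.cos (θ - φ)| = |Real.sin v| := by
      have h3 : θ - φ = (v + π/2) + (m:ℝ)*π := by rw [hvdef]; ring
      rw [h3, Real.cos_add_int_mul_pi, Real.cos_add_pi_div_two]
      rw [abs_mul, abs_neg]
      have habs1 : |((-1:ℝ)) ^ m| = 1 := by
        rcases Int.even_or_odd m with he | ho
        · rw [he.neg_one_zpow, abs_one]
        · rw [ho.neg_one_zpow]
          norm_num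
      rw [habs1, one_mul]
    have hsv : |Real.sin v| ≤ t := hcos ▸ hct
    have habs_v := abs_le.1 hv
    have hvs : |v| ≤ s := by
      have h4 : Real.sin |v| = |Real.sin v| := by
        rcases abs_cases v with ⟨h, h'⟩ | ⟨h, h'⟩
        · rw [h, abs_of_nonneg (Real.sin_nonneg_of_nonneg_of_le_pi h' (by linarith))]
        · rw [h, Real.sin_neg,
            abs_of_nonpos (Real.sin_nonpos_of_nonpos_of_neg_pi_le h'.le (by linarith))]
      calc |v| = Real.arcsin (Real.sin |v|) :=
            (Real.arcsin_sin (by linarith [abs_nonneg v]) hv).symm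
        _ = Real.arcsin |Real.sin v| := by rw [h4]
        _ ≤ s := Real.monotone_arcsin hsv
    have hmem : θ ∈ Icc (φ + π/2 + (m:ℝ)*π - s) (φ + π/2 + (m:ℝ)*π + s) := by
      have := abs_le.1 hvs
      constructor <;> simp only [hvdef] at this <;> [linarith [this.1]; linarith [this.2]]
    have hmrange : m ∈ Finset.Icc (M-1) (M+1) := by
      have hm1 : -φ - π ≤ (m:ℝ)*π := by linarith [habs_v.1, habs_v.2]
      have hm2 : (m:ℝ)*π ≤ π - φ := by linarith [habs_v.1, habs_v.2]
      simp only [Finset.mem_Icc]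
      constructor
      · have hle : -φ/π ≤ (m:ℝ) + 1 := by rw [div_le_iff₀ hπ]; nlinarith
        have : M ≤ m + 1 := by
          rw [hM]
          exact Int.ceil_le.2 (by push_cast; exact hle)
        omega
      · have hle : (m:ℝ) - 1 ≤ -φ/π := by rw [le_div_iff₀ hπ]; nlinarith
        have h6 : ((m:ℝ) - 1 : ℝ) ≤ (M:ℝ) := hle.trans (Int.le_ceil _)
        have : m - 1 ≤ M := by exact_mod_cast h6
        omega
    exact Set.mem_iUnion₂.2 ⟨m, hmrange, hmem⟩
  calc volume {θ : ℝ | θ ∈ Icc (0:ℝ) π ∧ |Real.cos (θ - φ)| ≤ t}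
      ≤ volume (⋃ m ∈ Finset.Icc (M-1) (M+1),
          Icc (φ + π/2 + (m:ℝ)*π - s) (φ + π/2 + (m:ℝ)*π + s)) := measure_mono hsub
    _ ≤ ∑ m ∈ Finset.Icc (M-1) (M+1),
          volume (Icc (φ + π/2 + (m:ℝ)*π - s) (φ + π/2 + (m:ℝ)*π + s)) :=
        measure_biUnion_finset_le _ _
    _ = ∑ m ∈ Finset.Icc (M-1) (M+1), ENNReal.ofReal (2*s) := by
        refine Finset.sum_congr rfl fun m _ => ?_
        rw [Real.volume_Icc]
        congr 1
        ring
    _ ≤ ENNReal.ofReal (6 * s) := by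
        rw [Finset.sum_const]
        have hcard : (Finset.Icc (M-1) (M+1)).card = 3 := by
          rw [Int.card_Icc]
          omega
        rw [hcard]
        refine le_of_eq ?_
        calc (3 : ℕ) • ENNReal.ofReal (2*s) = 3 * ENNReal.ofReal (2*s) := by
              rw [nsmul_eq_mul]; norm_num
          _ = ENNReal.ofReal 3 * ENNReal.ofReal (2*s) := by
              rw [ENNReal.ofReal_ofNat]
          _ = ENNReal.ofReal (3 * (2*s)) := (ENNReal.ofReal_mul (by norm_num)).symm
          _ = ENNReal.ofReal (6*s) := by congr 1; ring

set_option maxHeartbeats 1000000 in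
/-- There exists `C > 0` such that for all `n ≥ 1` and `0 ≤ k < n`: if two distinct
squares `Q_{a,b}`, `Q_{a',b'}` of `K_n` have words agreeing up to index `k` (so they lie
in a common square of side `4^{-k}`) but `(a_{k+1}, b_{k+1}) ≠ (a'_{k+1}, b'_{k+1})`
(no common square of side `4^{-k-1}`), then
`∫₀^π |proj_θ(Q_{a,b}) ∩ proj_θ(Q_{a',b'})| dθ ≤ C · 4^{k − 2n}`. -/
theorem integral_projection_intersection_kpair_le : ∃ C : ℝ, 0 < C ∧
    ∀ n : ℕ, 1 ≤ n → ∀ k : ℕ, ∀ hk : k < n, ∀ a b a' b' : Fin n → Bool,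
      (∀ i : Fin n, (i : ℕ) < k → a i = a' i ∧ b i = b' i) →
      ¬(a ⟨k, hk⟩ = a' ⟨k, hk⟩ ∧ b ⟨k, hk⟩ = b' ⟨k, hk⟩) →
      (∫ θ in (0 : ℝ)..π,
        (volume (projAngle θ '' cantorSq a b ∩ projAngle θ '' cantorSq a' b')).toReal) ≤
        C * (4 : ℝ) ^ ((k : ℤ) - 2 * n) := by
  refine ⟨200, by norm_num, ?_⟩
  intro n hn k hk a b a' b' hagree hne
  have hπ := Real.pi_pos
  set s : ℝ := (4:ℝ) ^ (-(n:ℤ)) with hs_def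
  have hs0 : 0 < s := by positivity
  set d1 : ℝ := cantorX a - cantorX a' with hd1
  set d2 : ℝ := cantorX b - cantorX b' with hd2
  set P : ℝ := (4:ℝ) ^ ((k:ℤ) - 2 * n) with hP
  have hP0 : 0 < P := by positivity
  set A : ℝ := (4:ℝ) ^ (-(k:ℤ)) with hA
  have hA0 : 0 < A := by positivity
  -- separation
  have hsepA : A/2 ≤ |d1| ∨ A/2 ≤ |d2| := by
    have hq : 2 * ((1:ℝ)/4) ^ (k+1) = A/2 := by
      rw [quarter_pow, hA]
      rw [show (-((k:ℕ)+1:ℕ):ℤ) = -(k:ℤ) + (-1) by push_cast; ring, zpow_add₀ (by norm_num : (4:ℝ) ≠ 0)]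
      norm_num
      ring
    rcases not_and_or.1 hne with h | h
    · left; rw [← hq]; exact sep hk a a' (fun i hi => (hagree i hi).1) h
    · right; rw [← hq]; exact sep hk b b' (fun i hi => (hagree i hi).2) h
  set z : ℂ := ⟨d1, d2⟩ with hz_def
  have hz : z ≠ 0 := by
    intro h
    have h1 : d1 = 0 := congrArg Complex.re h
    have h2 : d2 = 0 := congrArg Complex.im h
    rcases hsepA with h' | h'
    · rw [h1] at h'; simp at h'; linarith
    · rw [h2] at h'; simp at h'; linarith
  set r : ℝ := ‖z‖ with hr
  have hr_lb : A/2 ≤ r := by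
    rcases hsepA with h | h
    · exact h.trans (Complex.abs_re_le_norm z)
    · exact h.trans (Complex.abs_im_le_norm z)
  have hr0 : 0 < r := lt_of_lt_of_le (by positivity) hr_lb
  set φ : ℝ := Complex.arg z with hφ
  have hform : ∀ θ : ℝ, d1 * Real.cos θ + d2 * Real.sin θ = r * Real.cos (θ - φ) := by
    intro θ
    have hc : Real.cos φ = d1 / r := Complex.cos_arg hz
    have hsn : Real.sin φ = d2 / r := Complex.sin_arg z
    rw [Real.cos_sub, hc, hsn]
    field_simp
  set t : ℝ := 2*s / r with ht_def
  have ht0 : 0 ≤ t := by positivity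
  have hsA : s ≤ A/4 := by
    have : s = ((1:ℝ)/4) ^ n := by rw [quarter_pow]
    have hA4 : A/4 = ((1:ℝ)/4) ^ (k+1) := by
      rw [quarter_pow, hA, show (-((k:ℕ)+1:ℕ):ℤ) = -(k:ℤ) + (-1) by push_cast; ring,
        zpow_add₀ (by norm_num : (4:ℝ) ≠ 0)]
      norm_num
      ring
    rw [this, hA4]
    exact pow_le_pow_of_le_one (by norm_num) (by norm_num) (by omega)
  have ht1 : t ≤ 1 := by
    rw [ht_def, div_le_one hr0]
    linarith
  set E : Set ℝ := {θ : ℝ | |d1 * Real.cos θ + d2 * Real.sin θ| ≤ 2*s} with hE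
  have hEmeas : MeasurableSet E := by
    have hcont : Continuous fun θ : ℝ => |d1 * Real.cos θ + d2 * Real.sin θ| := by continuity
    exact measurableSet_le hcont.measurable measurable_const
  set f : ℝ → ℝ := fun θ =>
    (volume (projAngle θ '' cantorSq a b ∩ projAngle θ '' cantorSq a' b')).toReal with hf
  set g : ℝ → ℝ := E.indicator (fun _ => 4*s) with hg
  have hfg : ∀ θ : ℝ, f θ ≤ g θ := by
    intro θ
    by_cases hθ : θ ∈ E
    · rw [hg, Set.indicator_of_mem hθ]
      have hvol : volume (projAngle θ '' cantorSq a b ∩ projAngle θ '' cantorSq a' b')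
          ≤ ENNReal.ofReal (4*s) :=
        le_trans (measure_mono inter_subset_left) (proj_vol_le θ _ _ s hs0.le)
      calc f θ ≤ (ENNReal.ofReal (4*s)).toReal :=
            ENNReal.toReal_mono ENNReal.ofReal_ne_top hvol
        _ = 4*s := ENNReal.toReal_ofReal (by positivity)
    · rw [hg, Set.indicator_of_notMem hθ]
      have hempty : projAngle θ '' cantorSq a b ∩ projAngle θ '' cantorSq a' b' = ∅ := by
        by_contra hne'
        exact hθ (proj_cap_nonempty hs0.le (Set.nonempty_iff_ne_empty.2 hne'))
      rw [hf]
      simp only [hempty, measure_empty, ENNReal.toReal_zero, le_refl]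
  have hg_int : IntervalIntegrable g volume 0 π := by
    rw [intervalIntegrable_iff, Set.uIoc_of_le hπ.le]
    exact (MeasureTheory.integrableOn_const measure_Ioc_lt_top.ne).indicator hEmeas
  by_cases hf_int : IntervalIntegrable f volume 0 π
  swap
  · rw [intervalIntegral.integral_undef hf_int]
    positivity
  have h1 : (∫ θ in (0:ℝ)..π, f θ) ≤ ∫ θ in (0:ℝ)..π, g θ :=
    intervalIntegral.integral_mono_on hπ.le hf_int hg_int (fun θ _ => hfg θ)
  have h2 : (∫ θ in (0:ℝ)..π, g θ) = (volume (E ∩ Ioc 0 π)).toReal * (4*s) := by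
    rw [intervalIntegral.integral_of_le hπ.le, hg, MeasureTheory.integral_indicator hEmeas,
      MeasureTheory.setIntegral_const, measureReal_def, Measure.restrict_apply hEmeas, smul_eq_mul]
  have h3 : volume (E ∩ Ioc 0 π) ≤ ENNReal.ofReal (6 * Real.arcsin t) := by
    refine le_trans (measure_mono ?_) (angle_meas φ t ht0)
    rintro θ ⟨hθE, hθI⟩
    refine ⟨⟨hθI.1.le, hθI.2⟩, ?_⟩
    have h5 : |r * Real.cos (θ - φ)| ≤ 2*s := by rw [← hform θ]; exact hθE
    rw [abs_mul, abs_of_pos hr0] at h5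
    rw [ht_def, le_div_iff₀ hr0, mul_comm]
    exact h5
  have h4 : (volume (E ∩ Ioc 0 π)).toReal ≤ 6 * Real.arcsin t :=
    ENNReal.toReal_le_of_le_ofReal (by have := Real.arcsin_nonneg.2 ht0; linarith) h3
  have harc : Real.arcsin t ≤ π/2 * t := arcsin_le_bound ht0 ht1
  have hPA : s * s = P * A := by
    rw [hs_def, hP, hA, ← zpow_add₀ (by norm_num : (4:ℝ) ≠ 0),
      ← zpow_add₀ (by norm_num : (4:ℝ) ≠ 0)]
    congr 1
    ring
  have hmain : (volume (E ∩ Ioc 0 π)).toReal * (4*s) ≤ 200 * P := by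
    have step1 : (volume (E ∩ Ioc 0 π)).toReal * (4*s) ≤ (6 * (π/2 * t)) * (4*s) := by
      have h6 : (volume (E ∩ Ioc 0 π)).toReal ≤ 6 * (π/2 * t) := by linarith
      exact mul_le_mul_of_nonneg_right h6 (by positivity)
    have step2 : (6 * (π/2 * t)) * (4*s) = 24 * π * (s * s) / r := by
      rw [ht_def]
      field_simp
      ring
    have step3 : 24 * π * (s * s) / r ≤ 48 * π * P := by
      rw [div_le_iff₀ hr0, hPA]
      have heq : 24 * π * (P * A) = 48 * π * P * (A/2) := by ring
      rw [heq]
      exact mul_le_mul_of_nonneg_left hr_lb (by positivity)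
    have step4 : 48 * π * P ≤ 200 * P := by
      have hπ4 := Real.pi_le_four
      nlinarith [hP0.le]
    linarith
  calc (∫ θ in (0:ℝ)..π, f θ) ≤ ∫ θ in (0:ℝ)..π, g θ := h1
    _ = (volume (E ∩ Ioc 0 π)).toReal * (4*s) := h2
    _ ≤ 200 * P := hmain
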